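/- Let C, C' ∈ GL⁺(H) commute with each other and with each T_i and with K. If {T_i}_{i∈I} is a K-operator frame for End_A*(H) with bounds A, B, then {T_i}_{i∈I} is a (C,C')-controlled K-operator frame for End_A*(H), with bounds A·m and B·‖(CC')^{1/2}‖², where m > 0 is a lower bound of (CC')^{1/2} with respect to the inner product. -/

import Mathlib

open scoped RightActions

variable {A : Type*} [CStarAlgebra A] [PartialOrder A] [StarOrderedRing A]
variable {H : Type*} [NormedAddCommGroup H] [NormedSpace ℂ H] [CompleteSpace H]
  [SMul A H] [CStarModule A H]

/-- `S` is the adjoint of `T` with respect to the `A`-valued inner product. -/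
def IsAdjointOf (T S : H →L[ℂ] H) : Prop :=
  ∀ x y : H, (inner A (T x) y : A) = inner A x (S y)

/-- `C` belongs to `GL⁺(H)` : invertible (with adjointable inverse), self-adjoint
and positive with respect to the `A`-valued inner product. -/
def MemGLPlus (C : H →L[ℂ] H) : Prop :=
  (∃ Ci : H →L[ℂ] H, Ci.comp C = ContinuousLinearMap.id ℂ H ∧
      C.comp Ci = ContinuousLinearMap.id ℂ H) ∧
  (∀ x y : H, (inner A (C x) y : A) = inner A x (C y)) ∧
  (∀ x : H, (0 : A) ≤ inner A x (C x))

/-- A strict contraction which is self-adjoint w.r.t. the `A`-valued inner product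
does not increase the inner product. -/
private lemma aux_contraction (S : H →L[ℂ] H)
    (hsa : ∀ x y : H, (inner A (S x) y : A) = inner A x (S y)) (hS : ‖S‖ < 1) (y : H) :
    (inner A (S y) (S y) : A) ≤ inner A y y := by
  set f : H → A := fun z => (inner A z z : A) - inner A (S z) (S z) with hf
  have step : ∀ z : H, f (S z) ≤ f z := by
    intro z
    have h0 : (0 : A) ≤ inner A (z - S (S z)) (z - S (S z)) := CStarModule.inner_self_nonneg
    have h1 : (inner A z (S (S z)) : A) = inner A (S z) (S z) := (hsa z (S z)).symm
    have h2 : (inner A (S (S z)) z : A) = inner A (S z) (S z) := hsa (S z) z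
    have hexp : (inner A (z - S (S z)) (z - S (S z)) : A) = f z - f (S z) := by
      simp only [CStarModule.inner_sub_left, CStarModule.inner_sub_right, hf, h1, h2]
      try abel
    rw [hexp] at h0
    exact sub_nonneg.mp h0
  have iter : ∀ n : ℕ, f (S^[n] y) ≤ f y := by
    intro n; induction n with
    | zero => simp
    | succ n ih =>
      rw [Function.iterate_succ_apply']
      exact (step _).trans ih
  have hit : ∀ n : ℕ, ‖S^[n] y‖ ≤ ‖S‖ ^ n * ‖y‖ := by
    intro n; induction n with
    | zero => simp
    | succ n ih =>
      rw [Function.iterate_succ_apply']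
      calc ‖S (S^[n] y)‖ ≤ ‖S‖ * ‖S^[n] y‖ := S.le_opNorm _
        _ ≤ ‖S‖ * (‖S‖ ^ n * ‖y‖) := by
            exact mul_le_mul_of_nonneg_left ih (norm_nonneg S)
        _ = ‖S‖ ^ (n + 1) * ‖y‖ := by ring
  have hbound : ∀ n : ℕ, -(((‖S‖ ^ (n + 1) * ‖y‖) ^ 2) • (1 : A)) ≤ f y := by
    intro n
    refine le_trans ?_ (iter n)
    set w := S^[n] y with hw
    have h1 : (inner A (S w) (S w) : A) ≤ ((‖S‖ ^ (n + 1) * ‖y‖) ^ 2) • (1 : A) := by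
      have hsa' : IsSelfAdjoint (inner A (S w) (S w) : A) := CStarModule.isSelfAdjoint_inner_self
      have h2 : (inner A (S w) (S w) : A) ≤ ‖(inner A (S w) (S w) : A)‖ • (1 : A) := by
        simpa [Algebra.algebraMap_eq_smul_one] using hsa'.le_algebraMap_norm_self
      refine h2.trans ?_
      have h3 : ‖(inner A (S w) (S w) : A)‖ ≤ (‖S‖ ^ (n + 1) * ‖y‖) ^ 2 := by
        rw [← CStarModule.norm_sq_eq]
        have h4 : ‖S w‖ ≤ ‖S‖ ^ (n + 1) * ‖y‖ := by
          calc ‖S w‖ ≤ ‖S‖ * ‖w‖ := S.le_opNorm _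
            _ ≤ ‖S‖ * (‖S‖ ^ n * ‖y‖) := mul_le_mul_of_nonneg_left (hit n) (norm_nonneg S)
            _ = ‖S‖ ^ (n + 1) * ‖y‖ := by ring
        exact pow_le_pow_left₀ (norm_nonneg _) h4 2
      exact smul_le_smul_of_nonneg_right h3 zero_le_one
    have h6 : (0 : A) ≤ inner A w w := CStarModule.inner_self_nonneg
    have h7 : -(((‖S‖ ^ (n + 1) * ‖y‖) ^ 2) • (1 : A)) ≤ -(inner A (S w) (S w) : A) :=
      neg_le_neg h1
    refine h7.trans ?_
    have h8 : (0 : A) - inner A (S w) (S w) ≤ inner A w w - inner A (S w) (S w) :=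
      sub_le_sub_right h6 _
    rw [zero_sub] at h8
    exact h8
  have htend : Filter.Tendsto
      (fun n : ℕ => f y + ((‖S‖ ^ (n + 1) * ‖y‖) ^ 2) • (1 : A)) Filter.atTop (nhds (f y)) := by
    have h1 : Filter.Tendsto (fun n : ℕ => (‖S‖ ^ (n + 1) * ‖y‖) ^ 2) Filter.atTop (nhds 0) := by
      have h2 : Filter.Tendsto (fun n : ℕ => ‖S‖ ^ (n + 1)) Filter.atTop (nhds 0) :=
        (tendsto_pow_atTop_nhds_zero_of_lt_one (norm_nonneg S) hS).comp
          (Filter.tendsto_add_atTop_nat 1)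
      have := ((h2.mul_const ‖y‖).pow 2)
      simpa using this
    have h3 : Filter.Tendsto (fun n : ℕ => ((‖S‖ ^ (n + 1) * ‖y‖) ^ 2) • (1 : A))
        Filter.atTop (nhds 0) := by
      simpa using h1.smul_const (1 : A)
    simpa using (tendsto_const_nhds (x := f y)).add h3
  have hmem : (0 : A) ≤ f y := by
    refine CStarAlgebra.isClosed_nonneg.mem_of_tendsto htend ?_
    filter_upwards with n
    have hb := hbound n
    show (0 : A) ≤ _
    have h9 := add_le_add_right hb (((‖S‖ ^ (n + 1) * ‖y‖) ^ 2) • (1 : A))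
    rwa [add_neg_cancel, add_comm] at h9
  have hmem2 : (0 : A) ≤ (inner A y y : A) - inner A (S y) (S y) := by
    rw [hf] at hmem
    exact hmem
  exact sub_nonneg.mp hmem2

/-- The key operator inequality: `⟨Dy, Dy⟩ ≤ ‖D‖² • ⟨y, y⟩` for `D` self-adjoint
with respect to the `A`-valued inner product. -/
private lemma aux_norm_sq (D : H →L[ℂ] H)
    (hDsa : ∀ x y : H, (inner A (D x) y : A) = inner A x (D y)) (y : H) :
    (inner A (D y) (D y) : A) ≤ ‖D‖ ^ 2 • inner A y y := by
  have key : ∀ n : ℕ, (inner A (D y) (D y) : A) ≤ ((‖D‖ + 1 / (n + 1)) ^ 2) • inner A y y := by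
    intro n
    set c : ℝ := ‖D‖ + 1 / (n + 1) with hc
    have hc0 : 0 < c := by positivity
    set S : H →L[ℂ] H := c⁻¹ • D with hS
    have hSapp : ∀ z : H, S z = c⁻¹ • D z := fun z => rfl
    have hSsa : ∀ u v : H, (inner A (S u) v : A) = inner A u (S v) := by
      intro u v
      rw [hSapp, hSapp, CStarModule.inner_smul_left_real, CStarModule.inner_smul_right_real,
        hDsa]
    have hSnorm : ‖S‖ < 1 := by
      have hlt : ‖D‖ < c := by
        rw [hc]
        exact lt_add_of_pos_right _ (by positivity)
      calc ‖S‖ ≤ ‖(c⁻¹ : ℝ)‖ * ‖D‖ := D.opNorm_smul_le c⁻¹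
        _ = c⁻¹ * ‖D‖ := by rw [Real.norm_eq_abs, abs_of_pos (inv_pos.mpr hc0)]
        _ < c⁻¹ * c := mul_lt_mul_of_pos_left hlt (inv_pos.mpr hc0)
        _ = 1 := inv_mul_cancel₀ (ne_of_gt hc0)
    have h2 := aux_contraction S hSsa hSnorm y
    have h3 : (inner A (S y) (S y) : A) = (c⁻¹ * c⁻¹) • inner A (D y) (D y) := by
      rw [hSapp, CStarModule.inner_smul_left_real, CStarModule.inner_smul_right_real, smul_smul]
    rw [h3] at h2
    have h4 := smul_le_smul_of_nonneg_left h2 (le_of_lt (mul_pos hc0 hc0))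
    rw [smul_smul] at h4
    have h5 : (c * c) * (c⁻¹ * c⁻¹) = 1 := by field_simp
    rw [h5, one_smul] at h4
    calc (inner A (D y) (D y) : A) ≤ (c * c) • inner A y y := h4
      _ = (c ^ 2) • inner A y y := by rw [sq]
  have htend : Filter.Tendsto (fun n : ℕ => ((‖D‖ + 1 / (n + 1)) ^ 2) • (inner A y y : A))
      Filter.atTop (nhds (‖D‖ ^ 2 • inner A y y)) := by
    have h1 : Filter.Tendsto (fun n : ℕ => ‖D‖ + 1 / (n + 1 : ℝ)) Filter.atTop (nhds ‖D‖) := by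
      have := tendsto_one_div_add_atTop_nhds_zero_nat (𝕜 := ℝ)
      simpa using (tendsto_const_nhds (x := ‖D‖)).add this
    exact ((h1.pow 2).smul_const _)
  have hsub : Filter.Tendsto
      (fun n : ℕ => ((‖D‖ + 1 / (n + 1)) ^ 2) • (inner A y y : A) - inner A (D y) (D y))
      Filter.atTop (nhds (‖D‖ ^ 2 • (inner A y y : A) - inner A (D y) (D y))) :=
    htend.sub_const _
  have hmem : ‖D‖ ^ 2 • (inner A y y : A) - inner A (D y) (D y) ∈ {a : A | 0 ≤ a} := by
    refine CStarAlgebra.isClosed_nonneg.mem_of_tendsto hsub ?_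
    filter_upwards with n
    simpa [Set.mem_setOf_eq, sub_nonneg] using key n
  exact sub_nonneg.mp hmem

/-- Summability by domination in a C*-algebra. -/
private lemma aux_summable {ι : Type*} {f g : ι → A} (hf0 : ∀ i, 0 ≤ f i)
    (hfg : ∀ i, f i ≤ g i) (hg : Summable g) : Summable f := by
  rw [summable_iff_vanishing_norm] at hg ⊢
  intro ε hε
  obtain ⟨s, hs⟩ := hg ε hε
  refine ⟨s, fun t ht => lt_of_le_of_lt ?_ (hs t ht)⟩
  have h0 : (0 : A) ≤ ∑ i ∈ t, f i := Finset.sum_nonneg fun i _ => hf0 i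
  exact CStarAlgebra.norm_le_norm_of_nonneg_of_le h0 (Finset.sum_le_sum fun i _ => hfg i)


/-- a `K`-operator frame whose operators commute with `C, C' ∈ GL⁺(H)`
is a `(C,C')`-controlled `K`-operator frame with bounds `A·m` and `B·‖(CC')^{1/2}‖²`,
where `D = (CC')^{1/2}` and `m` is a lower bound of `D` w.r.t. the inner product. -/
theorem stmt_2 {ι : Type*} (C C' K Ks D : H →L[ℂ] H) (T : ι → H →L[ℂ] H)
    (hC : MemGLPlus (A := A) C) (hC' : MemGLPlus (A := A) C')
    (hK : IsAdjointOf (A := A) K Ks)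
    (hCC' : C.comp C' = C'.comp C)
    (hCT : ∀ i, C.comp (T i) = (T i).comp C)
    (hC'T : ∀ i, C'.comp (T i) = (T i).comp C')
    (hCK : C.comp K = K.comp C) (hC'K : C'.comp K = K.comp C')
    -- `D` is the positive square root `(CC')^{1/2}`
    (hD2 : D.comp D = C.comp C')
    (hDsa : ∀ x y : H, (inner A (D x) y : A) = inner A x (D y))
    (hDpos : ∀ x : H, (0 : A) ≤ inner A x (D x))
    (m : ℝ) (hm : 0 < m)
    (hmD : ∀ x : H, m • (inner A x x : A) ≤ inner A (D x) (D x))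
    (a b : ℝ) (ha : 0 < a) (hb : 0 < b)
    (hframe : ∀ x : H,
      a • (inner A (Ks x) (Ks x) : A) ≤ ∑' i, (inner A (T i x) (T i x) : A) ∧
      ∑' i, (inner A (T i x) (T i x) : A) ≤ b • inner A x x) :
    ∀ x : H,
      (a * m) • (inner A (Ks x) (Ks x) : A) ≤
        ∑' i, (inner A (T i (C x)) (T i (C' x)) : A) ∧
      ∑' i, (inner A (T i (C x)) (T i (C' x)) : A) ≤ (b * ‖D‖ ^ 2) • inner A x x := by
  intro x
  set f : ι → A := fun i => inner A (T i x) (T i x) with hfdef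
  set g : ι → A := fun i => inner A (T i (C x)) (T i (C' x)) with hgdef
  have key1 : ∀ i, g i = (inner A (D (T i x)) (D (T i x)) : A) := by
    intro i
    have h1 : T i (C x) = C (T i x) := by
      have := ContinuousLinearMap.ext_iff.mp (hCT i) x
      simpa using this.symm
    have h2 : T i (C' x) = C' (T i x) := by
      have := ContinuousLinearMap.ext_iff.mp (hC'T i) x
      simpa using this.symm
    have h3 : C (C' (T i x)) = D (D (T i x)) := by
      have := ContinuousLinearMap.ext_iff.mp hD2 (T i x)
      simpa using this.symm
    calc g i = inner A (C (T i x)) (C' (T i x)) := by rw [hgdef]; simp only [h1, h2]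
      _ = inner A (T i x) (C (C' (T i x))) := hC.2.1 _ _
      _ = inner A (T i x) (D (D (T i x))) := by rw [h3]
      _ = inner A (D (T i x)) (D (T i x)) := (hDsa _ _).symm
  have hf0 : ∀ i, (0 : A) ≤ f i := fun i => CStarModule.inner_self_nonneg
  have hg0 : ∀ i, (0 : A) ≤ g i := fun i => by
    rw [key1 i]; exact CStarModule.inner_self_nonneg
  have hlow : ∀ i, m • f i ≤ g i := fun i => by
    rw [key1 i]; exact hmD (T i x)
  have hup : ∀ i, g i ≤ ‖D‖ ^ 2 • f i := fun i => by
    rw [key1 i]; exact aux_norm_sq D hDsa (T i x)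
  have hq0 : (0 : A) ≤ inner A x x := CStarModule.inner_self_nonneg
  have hp0 : (0 : A) ≤ inner A (Ks x) (Ks x) := CStarModule.inner_self_nonneg
  by_cases sg : Summable g
  · -- summable case
    have sf : Summable f := by
      refine aux_summable hf0 (g := fun i => m⁻¹ • g i) (fun i => ?_) (sg.const_smul m⁻¹)
      have := smul_le_smul_of_nonneg_left (hlow i) (le_of_lt (inv_pos.mpr hm))
      rwa [smul_smul, inv_mul_cancel₀ (ne_of_gt hm), one_smul] at this
    constructor
    · calc (a * m) • (inner A (Ks x) (Ks x) : A)
          = m • (a • (inner A (Ks x) (Ks x) : A)) := by rw [smul_smul, mul_comm]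
        _ ≤ m • ∑' i, f i := smul_le_smul_of_nonneg_left (hframe x).1 (le_of_lt hm)
        _ = ∑' i, m • f i := (Summable.tsum_const_smul m sf).symm
        _ ≤ ∑' i, g i := Summable.tsum_le_tsum (fun i => hlow i) (sf.const_smul m) sg
    · calc ∑' i, g i ≤ ∑' i, ‖D‖ ^ 2 • f i :=
          Summable.tsum_le_tsum (fun i => hup i) sg (sf.const_smul _)
        _ = ‖D‖ ^ 2 • ∑' i, f i := Summable.tsum_const_smul _ sf
        _ ≤ ‖D‖ ^ 2 • (b • (inner A x x : A)) :=
          smul_le_smul_of_nonneg_left (hframe x).2 (by positivity)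
        _ = (b * ‖D‖ ^ 2) • inner A x x := by rw [smul_smul, mul_comm]
  · -- non-summable case
    have hts : ∑' i, g i = 0 := tsum_eq_zero_of_not_summable sg
    have sfn : ¬ Summable f := by
      intro sf
      exact sg (aux_summable hg0 hup (sf.const_smul _))
    have htsf : ∑' i, f i = 0 := tsum_eq_zero_of_not_summable sfn
    have hple : a • (inner A (Ks x) (Ks x) : A) ≤ 0 := by
      have := (hframe x).1
      rwa [← hfdef, htsf] at this
    have hp : (inner A (Ks x) (Ks x) : A) = 0 := by
      have h1 : (inner A (Ks x) (Ks x) : A) ≤ 0 := by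
        have := smul_le_smul_of_nonneg_left hple (le_of_lt (inv_pos.mpr ha))
        rwa [smul_smul, inv_mul_cancel₀ (ne_of_gt ha), one_smul, smul_zero] at this
      exact le_antisymm h1 hp0
    constructor
    · rw [hts, hp, smul_zero]
    · rw [hts]
      exact smul_nonneg (by positivity) hq0
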